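/- Let D be a finite lattice of languages with canonical preorder ≤_D, let ρ : 2^{A*} → R be a multiplicative rating map, and let L ⊆ A* and r ∈ R. Then r ∈ I_D[L, ρ] (the D-optimal ρ-imprint on L) if and only if there exist a word w ∈ L and a language K ⊆ A* such that w ≤_D u for every u ∈ K, and r ≤ ρ(K). -/

import Mathlib

/-- The canonical order of an idempotent hemiring: `r ≤ s` iff `s + r = s`. -/
def hle {R : Type*} [NonUnitalSemiring R] (r s : R) : Prop := s + r = s

/-- Concatenation of languages. -/
def lcat {A : Type*} (K L : Set (List A)) : Set (List A) :=
  {w | ∃ u ∈ K, ∃ v ∈ L, w = u ++ v}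

def IsLatticeClass {A : Type*} (C : Set (Set (List A))) : Prop :=
  ∅ ∈ C ∧ Set.univ ∈ C ∧ (∀ K L : Set (List A), K ∈ C → L ∈ C → K ∪ L ∈ C) ∧
    (∀ K L : Set (List A), K ∈ C → L ∈ C → K ∩ L ∈ C)

/-- Canonical preorder `≤_D`. -/
def CanPre {A : Type*} (C : Set (Set (List A))) (w w' : List A) : Prop :=
  ∀ L ∈ C, w ∈ L → w' ∈ L

/-- The `ρ`-imprint of a set of languages. -/
def Imprint {A R : Type*} [NonUnitalSemiring R]
    (ρ : Set (List A) → R) (Ks : Set (Set (List A))) : Set R :=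
  {r | ∃ K ∈ Ks, hle r (ρ K)}

/-- `Ks` is a `D`-cover of `L`. -/
def IsCoverIn {A : Type*} (D : Set (List A) → Prop) (L : Set (List A))
    (Ks : Set (Set (List A))) : Prop :=
  Ks.Finite ∧ (∀ K ∈ Ks, D K) ∧ L ⊆ ⋃₀ Ks

/-- The `D`-optimal `ρ`-imprint on `L`. -/
def OptImp {A R : Type*} [NonUnitalSemiring R]
    (D : Set (List A) → Prop) (L : Set (List A)) (ρ : Set (List A) → R) : Set R :=
  {r | ∀ Ks : Set (Set (List A)), IsCoverIn D L Ks → r ∈ Imprint ρ Ks}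

/-- For a finite lattice `D`: `r ∈ I_D[L, ρ]` iff there are `w ∈ L` and `K ⊆ A*` with
`w ≤_D u` for all `u ∈ K` and `r ≤ ρ(K)`. -/
lemma sInter_mem_of_lattice {A : Type*} {D : Set (Set (List A))} (hlat : IsLatticeClass D)
    {S : Set (Set (List A))} (hS : S.Finite) (hSD : S ⊆ D) : ⋂₀ S ∈ D := by
  refine Set.Finite.induction_on (motive := fun S _ => S ⊆ D → ⋂₀ S ∈ D) S hS ?_ ?_ hSD
  · intro _; simpa using hlat.2.1
  · intro a S _ _ ih hSD'
    rw [Set.sInter_insert]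
    exact hlat.2.2.2 _ _ (hSD' (Set.mem_insert _ _))
      (ih (fun x hx => hSD' (Set.mem_insert_of_mem _ hx)))

theorem stmt17 {A R : Type*} [NonUnitalSemiring R] [Finite R]
    (hid : ∀ r : R, r + r = r)
    (D : Set (Set (List A))) (hfin : D.Finite) (hlat : IsLatticeClass D)
    (ρ : Set (List A) → R) (h0 : ρ ∅ = 0)
    (hadd : ∀ K L : Set (List A), ρ (K ∪ L) = ρ K + ρ L)
    (hmul : ∀ K L : Set (List A), ρ (lcat K L) = ρ K * ρ L)
    (L : Set (List A)) (r : R) :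
    r ∈ OptImp (· ∈ D) L ρ ↔
      ∃ w ∈ L, ∃ K : Set (List A), (∀ u ∈ K, CanPre D w u) ∧ hle r (ρ K) := by
  have htrans : ∀ a b c : R, hle a b → hle b c → hle a c := by
    intro a b c hab hbc
    unfold hle at *
    calc c + a = c + b + a := by rw [hbc]
    _ = c + (b + a) := by rw [add_assoc]
    _ = c + b := by rw [hab]
    _ = c := hbc
  -- the upper set of a word
  set U : List A → Set (List A) := fun w => ⋂₀ {M | M ∈ D ∧ w ∈ M} with hU
  have hUmem : ∀ w u, u ∈ U w ↔ CanPre D w u := by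
    intro w u
    simp only [hU, Set.mem_sInter, Set.mem_setOf_eq, CanPre]
    constructor
    · intro h M hM hw; exact h M ⟨hM, hw⟩
    · rintro h M ⟨hM, hw⟩; exact h M hM hw
  have hUD : ∀ w, U w ∈ D :=
    fun w => sInter_mem_of_lattice hlat (hfin.subset (fun M hM => hM.1)) (fun M hM => hM.1)
  constructor
  · intro hr
    have hcover : IsCoverIn (· ∈ D) L (U '' L) := by
      refine ⟨(hfin.finite_subsets.image Set.sInter).subset ?_, ?_, ?_⟩
      · rintro _ ⟨w, _, rfl⟩
        exact ⟨{M | M ∈ D ∧ w ∈ M}, fun M hM => hM.1, rfl⟩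
      · rintro _ ⟨w, _, rfl⟩; exact hUD w
      · intro w hw
        exact ⟨U w, ⟨w, hw, rfl⟩, (hUmem w w).2 (fun M hM h => h)⟩
    obtain ⟨K, ⟨w, hwL, rfl⟩, hK⟩ := hr _ hcover
    exact ⟨w, hwL, U w, fun u hu => (hUmem w u).1 hu, hK⟩
  · rintro ⟨w, hwL, K, hKup, hrK⟩ Ks ⟨hKsfin, hKsD, hKscov⟩
    obtain ⟨K', hK'Ks, hwK'⟩ := hKscov hwL
    refine ⟨K', hK'Ks, htrans r (ρ K) (ρ K') hrK ?_⟩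
    have hsub : K ⊆ K' := fun u hu => hKup u hu K' (hKsD K' hK'Ks) hwK'
    have : K' ∪ K = K' := Set.union_eq_self_of_subset_right hsub
    unfold hle
    calc ρ K' + ρ K = ρ (K' ∪ K) := (hadd _ _).symm
    _ = ρ K' := by rw [this]
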